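/- Let a', b', μ ∈ F with b' ≠ 0, μ ≠ 0 and b' + μ ≠ 0. Then there exists c ∈ F such that b'·[1,a'] ⊥ ⟨μ⟩ ≃ (b'+μ)·[1,c] ⊥ ⟨μ⟩. -/

import Mathlib

/-- The binary quadratic form `[b₁,b₂] : (x,y) ↦ b₁x² + xy + b₂y²` on `F × F`. -/
def binQF (F : Type*) [Field F] (b₁ b₂ : F) : QuadraticForm F (F × F) :=
  LinearMap.BilinMap.toQuadraticMap (LinearMap.mk₂ F
    (fun p q : F × F => b₁ * (p.1 * q.1) + p.1 * q.2 + b₂ * (p.2 * q.2))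
    (fun p p' q => by simp only [Prod.fst_add, Prod.snd_add]; ring)
    (fun a p q => by simp only [Prod.smul_fst, Prod.smul_snd, smul_eq_mul]; ring)
    (fun p q q' => by simp only [Prod.fst_add, Prod.snd_add]; ring)
    (fun a p q => by simp only [Prod.smul_fst, Prod.smul_snd, smul_eq_mul]; ring))

/-- over a field of characteristic 2, if `b' ≠ 0`, `μ ≠ 0` and `b' + μ ≠ 0`,
then there exists `c ∈ F` with `b'·[1,a'] ⊥ ⟨μ⟩ ≃ (b'+μ)·[1,c] ⊥ ⟨μ⟩`. -/
theorem stmt16 (F : Type*) [Field F] [CharP F 2] (a' b' mu : F)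
    (hb' : b' ≠ 0) (hmu : mu ≠ 0) (hbmu : b' + mu ≠ 0) :
    ∃ c : F,
      QuadraticMap.Equivalent
        ((b' • binQF F 1 a').prod (mu • (QuadraticMap.sq : QuadraticForm F F)))
        (((b' + mu) • binQF F 1 c).prod (mu • (QuadraticMap.sq : QuadraticForm F F))) := by
  have h2 : (2 : F) = 0 := CharP.cast_eq_zero F 2
  set s : F := b' + mu with hs
  refine ⟨a' * s / b', ⟨{
    toFun := fun p => ((p.1.1, (b' / s) * p.1.2), p.1.1 + p.2),
    invFun := fun p => ((p.1.1, (s / b') * p.1.2), p.2 - p.1.1),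
    map_add' := ?_, map_smul' := ?_, left_inv := ?_, right_inv := ?_,
    map_app' := ?_ }⟩⟩
  · intro p q
    simp only [Prod.fst_add, Prod.snd_add, Prod.mk_add_mk, Prod.mk.injEq]
    refine ⟨⟨trivial, by ring⟩, by ring⟩
  · intro a p
    simp only [Prod.smul_fst, Prod.smul_snd, smul_eq_mul, Prod.smul_mk, RingHom.id_apply,
      Prod.mk.injEq]
    refine ⟨⟨trivial, by ring⟩, by ring⟩
  · rintro ⟨⟨x, y⟩, z⟩
    simp only [Prod.mk.injEq]
    refine ⟨⟨trivial, by field_simp⟩, by ring⟩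
  · rintro ⟨⟨x, y⟩, z⟩
    simp only [Prod.mk.injEq]
    refine ⟨⟨trivial, by field_simp⟩, by ring⟩
  · intro p
    obtain ⟨⟨x, y⟩, z⟩ := p
    simp only [binQF, QuadraticMap.prod_apply, QuadraticMap.smul_apply,
      LinearMap.BilinMap.toQuadraticMap_apply, LinearMap.mk₂_apply,
      QuadraticMap.sq_apply, smul_eq_mul]
    field_simp
    rw [hs]
    linear_combination (mu * x^2 + mu * x * z) * h2
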